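/- For j < D-1 and all eigenvalues negative and distinct, the partial derivative of S_j with respect to λ_D equals S_j·( -1/λ_D + (1/λ_D)·Σ_{i=1}^{j} λ_i/(λ_D − λ_i) ), where S_j is the j-th eigensignature. -/

import Mathlib

/-- For j < D-1 and all eigenvalues negative and distinct,
∂S_j/∂λ_D = S_j·(−1/λ_D + (1/λ_D)·Σ_{i=1}^{j} λ_i/(λ_D − λ_i)), where on the
region of strictly negative eigenvalues
S_j = (λ_{j+1}²/(−λ_D))·∏_{i=1}^{j}(1 − λ_i/λ_D). -/
theorem stmt10 (D j : ℕ) (lam : ℕ → ℝ) (hj : j + 1 < D)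
    (hneg : ∀ i, 1 ≤ i → i ≤ D → lam i < 0)
    (hdist : ∀ i k, 1 ≤ i → i ≤ D → 1 ≤ k → k ≤ D → i ≠ k → lam i ≠ lam k) :
    HasDerivAt
      (fun t : ℝ => (lam (j + 1)) ^ 2 / (-t) * ∏ i ∈ Finset.Icc 1 j, (1 - lam i / t))
      (((lam (j + 1)) ^ 2 / (-(lam D)) * ∏ i ∈ Finset.Icc 1 j, (1 - lam i / lam D)) *
        (-1 / lam D + (1 / lam D) * ∑ i ∈ Finset.Icc 1 j, lam i / (lam D - lam i)))
      (lam D) := by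
  set L := lam D with hLdef
  set c := (lam (j + 1)) ^ 2 with hcdef
  have hLneg : L < 0 := hneg D (by omega) le_rfl
  have hL : L ≠ 0 := ne_of_lt hLneg
  have hmem : ∀ i ∈ Finset.Icc 1 j, lam i ≠ L := by
    intro i hi
    rw [Finset.mem_Icc] at hi
    exact hdist i D hi.1 (by omega) (by omega) le_rfl (by omega)
  -- derivative of A(t) = c / (-t)
  have hA : HasDerivAt (fun t : ℝ => c / (-t)) (c / L ^ 2) L := by
    have h := (hasDerivAt_const L c).div (hasDerivAt_id L).neg (by simpa using hL)
    refine h.congr_deriv (Eq.symm ?_)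
    simp only [Pi.neg_apply, id_eq]
    field_simp
    ring
  -- derivative of each factor
  have hfac : ∀ i ∈ Finset.Icc 1 j,
      HasDerivAt (fun t : ℝ => 1 - lam i / t) (lam i / L ^ 2) L := by
    intro i _
    have h := (hasDerivAt_const L (1 : ℝ)).sub
      (((hasDerivAt_const L (lam i)).div (hasDerivAt_id L) hL))
    refine h.congr_deriv (Eq.symm ?_)
    simp only [Pi.neg_apply, id_eq]
    field_simp
    ring
  have hP : HasDerivAt (fun t : ℝ => ∏ i ∈ Finset.Icc 1 j, (1 - lam i / t))
      (∑ i ∈ Finset.Icc 1 j,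
        (∏ k ∈ (Finset.Icc 1 j).erase i, (1 - lam k / L)) • (lam i / L ^ 2)) L :=
    HasDerivAt.fun_finsetProd hfac
  have hmul := hA.mul hP
  refine hmul.congr_deriv (Eq.symm ?_)
  rw [mul_add]
  have h1 : c / -L * (∏ i ∈ Finset.Icc 1 j, (1 - lam i / L)) * (-1 / L)
      = c / L ^ 2 * ∏ i ∈ Finset.Icc 1 j, (1 - lam i / L) := by
    generalize (∏ i ∈ Finset.Icc 1 j, (1 - lam i / L)) = P
    field_simp
  rw [h1]
  congr 1
  rw [Finset.mul_sum, Finset.mul_sum, Finset.mul_sum]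
  apply Finset.sum_congr rfl
  intro i hi
  have hne : L - lam i ≠ 0 := sub_ne_zero.mpr (Ne.symm (hmem i hi))
  have hsplit : ∏ k ∈ Finset.Icc 1 j, (1 - lam k / L)
      = (1 - lam i / L) * ∏ k ∈ (Finset.Icc 1 j).erase i, (1 - lam k / L) :=
    (Finset.mul_prod_erase _ _ hi).symm
  rw [hsplit, smul_eq_mul]
  generalize (∏ k ∈ (Finset.Icc 1 j).erase i, (1 - lam k / L)) = Q
  field_simp
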